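/- Let k ≥ 1, M ≥ 0, C ≥ 0, let f : (0,∞) → ℝ and let c₁,…,c_k : (0,∞) → ℝ satisfy |c_j(ρ₀)| ≤ M for all 1 ≤ j ≤ k and ρ₀ > 0. Assume the uniform one-sided expansion: |f(ρ₀ + ρ) − f(ρ₀) − ∑_{j=1}^{k} c_j(ρ₀) ρ^j / j!| ≤ C ρ^{k+1} for all ρ₀ > 0 and ρ ∈ (0,1]. Then f is k times differentiable on (0,∞) and its j-th derivative equals c_j for every 1 ≤ j ≤ k; moreover there exists C′ depending only on k, M and C such that each c_j satisfies |c_j(ρ₁) − c_j(ρ₀)| ≤ C′ |ρ₁ − ρ₀| for all ρ₀, ρ₁ > 0 with |ρ₁ − ρ₀| ≤ 1/(2(k+1)). -/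

import Mathlib

open Polynomial Finset

lemma sum_choose_eq (i : ℕ) (x : ℝ) :
    ∑ l ∈ Finset.Icc 1 i, x ^ l * (i.choose l : ℝ) = (x + 1) ^ i - 1 := by
  have h := add_pow x 1 i
  simp only [one_pow, mul_one] at h
  have hr : Finset.range (i + 1) = insert 0 (Finset.Icc 1 i) := by
    ext m; simp only [Finset.mem_range, Finset.mem_insert, Finset.mem_Icc]; omega
  rw [hr, Finset.sum_insert (by simp)] at h
  simp only [pow_zero, Nat.choose_zero_right, Nat.cast_one, one_mul] at h
  linarith [h]

lemma inner_id (i : ℕ) (x h : ℝ) :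
    ∑ l ∈ Finset.Icc 1 i, x ^ l * h ^ (i - l) * h ^ l /
        ((Nat.factorial l : ℝ) * (Nat.factorial (i - l))) =
      ((x + 1) ^ i - 1) * h ^ i / (Nat.factorial i : ℝ) := by
  rw [← sum_choose_eq i x, Finset.sum_mul, Finset.sum_div]
  apply Finset.sum_congr rfl
  intro l hl
  obtain ⟨hl1, hl2⟩ := Finset.mem_Icc.mp hl
  rw [Nat.cast_choose ℝ hl2]
  have h1 : h ^ (i - l) * h ^ l = h ^ i := by rw [← pow_add]; congr 1; omega
  have hf1 : (Nat.factorial l : ℝ) ≠ 0 := Nat.cast_ne_zero.mpr (Nat.factorial_ne_zero l)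
  have hf2 : (Nat.factorial (i - l) : ℝ) ≠ 0 := Nat.cast_ne_zero.mpr (Nat.factorial_ne_zero _)
  have hf3 : (Nat.factorial i : ℝ) ≠ 0 := Nat.cast_ne_zero.mpr (Nat.factorial_ne_zero i)
  field_simp
  ring_nf
  have h2 : x ^ l * h ^ l * h ^ (i - l) = x ^ l * h ^ i := by
    rw [mul_assoc, mul_comm (h ^ l), h1]
  rw [h2]


lemma coeff_bound (n : ℕ) : ∃ Λ : ℝ, 0 ≤ Λ ∧ ∀ p : ℝ[X], p ∈ Polynomial.degreeLT ℝ n →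
    ∀ R : ℝ, 0 ≤ R → (∀ i : Fin n, |p.eval (i : ℝ)| ≤ R) → ∀ j : ℕ, |p.coeff j| ≤ Λ * R := by
  classical
  haveI : FiniteDimensional ℝ (Polynomial.degreeLT ℝ n) :=
    LinearEquiv.finiteDimensional (Polynomial.degreeLTEquiv ℝ n).symm
  set E : Polynomial.degreeLT ℝ n →ₗ[ℝ] (Fin n → ℝ) :=
    LinearMap.pi (fun i => (Polynomial.leval ((i : ℕ) : ℝ)).comp (Submodule.subtype _)) with hE
  have hEapp : ∀ (x : Polynomial.degreeLT ℝ n) (i : Fin n),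
      E x i = (x : ℝ[X]).eval ((i : ℕ) : ℝ) := by
    intro x i; simp [hE]
  have hinj : Function.Injective E := by
    rw [← LinearMap.ker_eq_bot, LinearMap.ker_eq_bot']
    rintro ⟨p, hp⟩ hEp
    have hev : ∀ x ∈ (Finset.range n).image (Nat.cast : ℕ → ℝ), p.eval x = 0 := by
      intro x hx
      simp only [Finset.mem_image, Finset.mem_range] at hx
      obtain ⟨m, hm, rfl⟩ := hx
      have h0 : E ⟨p, hp⟩ ⟨m, hm⟩ = 0 := by rw [hEp]; rfl
      rw [hEapp] at h0
      exact h0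
    have hcard : ((Finset.range n).image (Nat.cast : ℕ → ℝ)).card = n := by
      rw [Finset.card_image_of_injective _ Nat.cast_injective, Finset.card_range]
    have hdeg : p.degree < (((Finset.range n).image (Nat.cast : ℕ → ℝ)).card : ℕ) := by
      rw [hcard]; exact Polynomial.mem_degreeLT.mp hp
    have := Polynomial.eq_zero_of_degree_lt_of_eval_finset_eq_zero _ hdeg hev
    exact Subtype.ext this
  have hdim : Module.finrank ℝ (Polynomial.degreeLT ℝ n) = Module.finrank ℝ (Fin n → ℝ) :=
    (Polynomial.degreeLTEquiv ℝ n).finrank_eq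
  set e := E.linearEquivOfInjective hinj hdim with he
  set φ : ℕ → ((Fin n → ℝ) →L[ℝ] ℝ) := fun j => LinearMap.toContinuousLinearMap
    ((Polynomial.lcoeff ℝ j).comp ((Submodule.subtype _).comp
      (e.symm : (Fin n → ℝ) →ₗ[ℝ] Polynomial.degreeLT ℝ n))) with hφ
  refine ⟨∑ j ∈ Finset.range n, ‖φ j‖, Finset.sum_nonneg (fun j _ => norm_nonneg _), ?_⟩
  intro p hp R hR hev j
  have hΛR : 0 ≤ (∑ j ∈ Finset.range n, ‖φ j‖) * R :=
    mul_nonneg (Finset.sum_nonneg (fun j _ => norm_nonneg _)) hR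
  by_cases hj : j < n
  · set v : Fin n → ℝ := E ⟨p, hp⟩ with hv
    have hvs : e.symm v = ⟨p, hp⟩ := by
      have : v = e ⟨p, hp⟩ := by
        rw [he, hv]; exact (LinearMap.linearEquivOfInjective_apply hinj hdim _).symm
      rw [this, LinearEquiv.symm_apply_apply]
    have hφv : φ j v = p.coeff j := by
      simp [hφ, hvs]
    have hnv : ‖v‖ ≤ R := by
      rw [pi_norm_le_iff_of_nonneg hR]
      intro i
      rw [hv, hEapp, Real.norm_eq_abs]
      exact hev i
    calc |p.coeff j| = ‖φ j v‖ := by rw [hφv, Real.norm_eq_abs]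
      _ ≤ ‖φ j‖ * ‖v‖ := (φ j).le_opNorm v
      _ ≤ ‖φ j‖ * R := mul_le_mul_of_nonneg_left hnv (norm_nonneg _)
      _ ≤ (∑ j ∈ Finset.range n, ‖φ j‖) * R := by
          apply mul_le_mul_of_nonneg_right _ hR
          exact Finset.single_le_sum (fun i _ => norm_nonneg (φ i)) (Finset.mem_range.mpr hj)
  · have : p.coeff j = 0 := by
      apply Polynomial.coeff_eq_zero_of_degree_lt
      exact lt_of_lt_of_le (Polynomial.mem_degreeLT.mp hp)
        (by exact_mod_cast Nat.le_of_not_lt hj)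
    rw [this, abs_zero]; exact hΛR


/-- Lemma A: one-sided expansion of the coefficient functions. -/
lemma lemA' (k : ℕ) (hk : 1 ≤ k) (M C : ℝ) (hM : 0 ≤ M) (hC : 0 ≤ C) :
    ∃ K : ℝ, 0 ≤ K ∧ ∀ (f : ℝ → ℝ) (c : ℕ → ℝ → ℝ),
      (∀ ρ₀ : ℝ, 0 < ρ₀ → ∀ ρ : ℝ, 0 < ρ → ρ ≤ 1 →
        |f (ρ₀ + ρ) - f ρ₀ -
            ∑ j ∈ Finset.Icc 1 k, c j ρ₀ * ρ ^ j / (Nat.factorial j : ℝ)| ≤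
          C * ρ ^ (k + 1)) →
      ∀ j : ℕ, 1 ≤ j → j ≤ k → ∀ ρ₀ h : ℝ, 0 < ρ₀ → 0 < h →
        h ≤ 1 / (2 * ((k : ℝ) + 1)) →
      |c j (ρ₀ + h) - c j ρ₀ -
          ∑ i ∈ Finset.Icc (j + 1) k, c i ρ₀ * h ^ (i - j) / (Nat.factorial (i - j) : ℝ)|
        ≤ K * h ^ (k + 1 - j) := by
  obtain ⟨Λ, hΛ0, hΛ⟩ := coeff_bound (k + 1)
  refine ⟨(Nat.factorial k : ℝ) * Λ * (3 * C * ((k : ℝ) + 1) ^ (k + 1)), by positivity, ?_⟩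
  intro f c hexp j hj1 hjk ρ₀ h hρ₀ hh hhδ
  have hk1 : (0 : ℝ) < (k : ℝ) + 1 := by positivity
  have hδ1 : ((k : ℝ) + 1) * h ≤ 1 / 2 := by
    calc ((k : ℝ) + 1) * h ≤ ((k : ℝ) + 1) * (1 / (2 * ((k : ℝ) + 1))) :=
          mul_le_mul_of_nonneg_left hhδ (le_of_lt hk1)
      _ = 1 / 2 := by field_simp
  set ρ₁ : ℝ := ρ₀ + h with hρ₁def
  have hρ₁ : 0 < ρ₁ := by positivity
  set D : ℕ → ℝ := fun l =>
    (∑ i ∈ Finset.Icc l k, c i ρ₀ * h ^ (i - l) / (Nat.factorial (i - l) : ℝ)) - c l ρ₁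
    with hD
  set p : ℝ[X] := ∑ l ∈ Finset.Icc 1 k,
      Polynomial.C (D l * h ^ l / (Nat.factorial l : ℝ)) * Polynomial.X ^ l with hp
  -- degree bound
  have hpdeg : p ∈ Polynomial.degreeLT ℝ (k + 1) := by
    rw [Polynomial.mem_degreeLT, hp]
    apply lt_of_le_of_lt (Polynomial.degree_sum_le _ _)
    rw [Finset.sup_lt_iff (by exact_mod_cast WithBot.bot_lt_coe (k + 1))]
    intro l hl
    apply lt_of_le_of_lt (Polynomial.degree_C_mul_X_pow_le _ _)
    exact_mod_cast Nat.lt_succ_iff.mpr (Finset.mem_Icc.mp hl).2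
  -- eval identity
  have hev : ∀ x : ℝ, p.eval x =
      (∑ i ∈ Finset.Icc 1 k, c i ρ₀ * ((x + 1) * h) ^ i / (Nat.factorial i : ℝ)) -
      (∑ i ∈ Finset.Icc 1 k, c i ρ₀ * h ^ i / (Nat.factorial i : ℝ)) -
      (∑ i ∈ Finset.Icc 1 k, c i ρ₁ * (x * h) ^ i / (Nat.factorial i : ℝ)) := by
    intro x
    have e1 : p.eval x = ∑ l ∈ Finset.Icc 1 k,
        (D l * h ^ l / (Nat.factorial l : ℝ)) * x ^ l := by
      rw [hp]; simp [Polynomial.eval_finset_sum]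
    rw [e1]
    have e2 : ∀ l, (D l * h ^ l / (Nat.factorial l : ℝ)) * x ^ l =
        (∑ i ∈ Finset.Icc l k, c i ρ₀ *
            (x ^ l * h ^ (i - l) * h ^ l / ((Nat.factorial l : ℝ) * (Nat.factorial (i - l))))) -
        c l ρ₁ * (x * h) ^ l / (Nat.factorial l : ℝ) := by
      intro l
      have estep : (D l * h ^ l / (Nat.factorial l : ℝ)) * x ^ l =
          (∑ i ∈ Finset.Icc l k, c i ρ₀ * h ^ (i - l) / (Nat.factorial (i - l) : ℝ)) *
              (h ^ l / (Nat.factorial l : ℝ) * x ^ l) -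
            c l ρ₁ * (h ^ l / (Nat.factorial l : ℝ) * x ^ l) := by
        rw [hD]; ring
      rw [estep, Finset.sum_mul]
      congr 1
      · apply Finset.sum_congr rfl
        intro i _
        have hfl : (Nat.factorial l : ℝ) ≠ 0 := Nat.cast_ne_zero.mpr (Nat.factorial_ne_zero l)
        have hfil : (Nat.factorial (i - l) : ℝ) ≠ 0 :=
          Nat.cast_ne_zero.mpr (Nat.factorial_ne_zero _)
        field_simp
      · rw [mul_pow]; ring
    rw [Finset.sum_congr rfl (fun l _ => e2 l), Finset.sum_sub_distrib]
    congr 1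
    · -- double sum swap and inner identity
      rw [Finset.sum_comm' (t' := Finset.Icc 1 k) (s' := fun i => Finset.Icc 1 i)
        (by intro l i; simp only [Finset.mem_Icc]; omega)]
      rw [← Finset.sum_sub_distrib]
      apply Finset.sum_congr rfl
      intro i hi
      rw [← Finset.mul_sum, inner_id]
      have hfi : (Nat.factorial i : ℝ) ≠ 0 := Nat.cast_ne_zero.mpr (Nat.factorial_ne_zero i)
      rw [mul_pow]
      field_simp
  -- evaluation bounds
  set R : ℝ := 3 * C * (((k : ℝ) + 1) * h) ^ (k + 1) with hR
  have hR0 : 0 ≤ R := by positivity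
  have hδle1 : ((k : ℝ) + 1) * h ≤ 1 := le_trans hδ1 (by norm_num)
  have hevB : ∀ i : Fin (k + 1), |p.eval ((i : ℕ) : ℝ)| ≤ R := by
    intro i
    rcases Nat.eq_zero_or_pos i.val with h0 | hpos
    · have hcast : ((i : ℕ) : ℝ) = 0 := by rw [h0]; norm_num
      rw [hcast]
      have hz : p.eval 0 = 0 := by
        rw [hp, Polynomial.eval_finset_sum]
        apply Finset.sum_eq_zero
        intro l hl
        have hl1 : 1 ≤ l := (Finset.mem_Icc.mp hl).1
        simp [zero_pow (by omega : l ≠ 0)]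
      rw [hz, abs_zero]; exact hR0
    · set m : ℕ := i.val with hm
      have hm1 : 1 ≤ m := hpos
      have hmk : m ≤ k := by have := i.isLt; omega
      have hmr : (1 : ℝ) ≤ (m : ℝ) := by exact_mod_cast hm1
      have hmkr : (m : ℝ) ≤ (k : ℝ) := by exact_mod_cast hmk
      have hpos1 : 0 < ((m : ℝ) + 1) * h := by positivity
      have hle1a : ((m : ℝ) + 1) * h ≤ 1 :=
        le_trans (mul_le_mul_of_nonneg_right (by linarith) (le_of_lt hh)) hδle1
      have hpos2 : 0 < (m : ℝ) * h := by
        apply mul_pos _ hh; linarith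
      have hle2a : (m : ℝ) * h ≤ 1 :=
        le_trans (mul_le_mul_of_nonneg_right (by linarith) (le_of_lt hh)) hδle1
      have hle3a : h ≤ 1 := by nlinarith
      have T1 := hexp ρ₀ hρ₀ (((m : ℝ) + 1) * h) hpos1 hle1a
      have T2 := hexp ρ₀ hρ₀ h hh hle3a
      have T3 := hexp ρ₁ hρ₁ ((m : ℝ) * h) hpos2 hle2a
      have hpt : ρ₁ + (m : ℝ) * h = ρ₀ + ((m : ℝ) + 1) * h := by rw [hρ₁def]; ring
      have e3 : p.eval ((m : ℕ) : ℝ) =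
          -((f (ρ₀ + ((m : ℝ) + 1) * h) - f ρ₀ -
            ∑ i ∈ Finset.Icc 1 k, c i ρ₀ * (((m : ℝ) + 1) * h) ^ i / (Nat.factorial i : ℝ))
          - (f (ρ₀ + h) - f ρ₀ -
            ∑ i ∈ Finset.Icc 1 k, c i ρ₀ * h ^ i / (Nat.factorial i : ℝ))
          - (f (ρ₁ + (m : ℝ) * h) - f ρ₁ -
            ∑ i ∈ Finset.Icc 1 k, c i ρ₁ * ((m : ℝ) * h) ^ i / (Nat.factorial i : ℝ))) := by
        rw [hev ((m : ℕ) : ℝ), hpt, hρ₁def]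
        ring
      rw [e3, abs_neg]
      have tri : ∀ X Y Z : ℝ, |X - Y - Z| ≤ |X| + |Y| + |Z| := by
        intro X Y Z
        calc |X - Y - Z| ≤ |X - Y| + |Z| := abs_sub _ _
          _ ≤ |X| + |Y| + |Z| := by
              have := abs_sub X Y
              linarith
      apply le_trans (tri _ _ _)
      have hb1 : C * (((m : ℝ) + 1) * h) ^ (k + 1) ≤ C * (((k : ℝ) + 1) * h) ^ (k + 1) := by
        apply mul_le_mul_of_nonneg_left _ hC
        apply pow_le_pow_left₀ (le_of_lt hpos1)
        apply mul_le_mul_of_nonneg_right (by linarith) (le_of_lt hh)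
      have hb2 : C * h ^ (k + 1) ≤ C * (((k : ℝ) + 1) * h) ^ (k + 1) := by
        apply mul_le_mul_of_nonneg_left _ hC
        apply pow_le_pow_left₀ (le_of_lt hh)
        nlinarith
      have hb3 : C * ((m : ℝ) * h) ^ (k + 1) ≤ C * (((k : ℝ) + 1) * h) ^ (k + 1) := by
        apply mul_le_mul_of_nonneg_left _ hC
        apply pow_le_pow_left₀ (le_of_lt hpos2)
        apply mul_le_mul_of_nonneg_right (by linarith) (le_of_lt hh)
      rw [hR]
      calc _ ≤ C * (((m : ℝ) + 1) * h) ^ (k + 1) + C * h ^ (k + 1) +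
            C * ((m : ℝ) * h) ^ (k + 1) := by
            apply add_le_add (add_le_add T1 T2) T3
        _ ≤ 3 * C * (((k : ℝ) + 1) * h) ^ (k + 1) := by linarith
  -- coefficient extraction
  have hcoeff : p.coeff j = D j * h ^ j / (Nat.factorial j : ℝ) := by
    rw [hp, Polynomial.finset_sum_coeff]
    rw [Finset.sum_eq_single j]
    · simp [Polynomial.coeff_C_mul, Polynomial.coeff_X_pow]
    · intro l hl hne
      simp [Polynomial.coeff_C_mul, Polynomial.coeff_X_pow, Ne.symm hne]
    · intro hj
      exact absurd (Finset.mem_Icc.mpr ⟨hj1, hjk⟩) hj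
  have hbound := hΛ p hpdeg R hR0 hevB j
  rw [hcoeff] at hbound
  have hfj : (0 : ℝ) < (Nat.factorial j : ℝ) := by
    exact_mod_cast Nat.factorial_pos j
  have habs : |D j * h ^ j / (Nat.factorial j : ℝ)| = |D j| * h ^ j / (Nat.factorial j : ℝ) := by
    rw [abs_div, abs_mul, abs_pow, abs_of_pos hh, abs_of_pos hfj]
  rw [habs, div_le_iff₀ hfj, ← le_div_iff₀ (pow_pos hh j)] at hbound
  have heq : Λ * R * (Nat.factorial j : ℝ) / h ^ j =
      ((Nat.factorial j : ℝ) * Λ * (3 * C * ((k : ℝ) + 1) ^ (k + 1))) * h ^ (k + 1 - j) := by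
    rw [hR, mul_pow]
    have hsplitpow : h ^ (k + 1) = h ^ j * h ^ (k + 1 - j) := by
      rw [← pow_add]; congr 1; omega
    rw [hsplitpow]
    field_simp
  rw [heq] at hbound
  -- identify the target with -(D j)
  have hsplit : (∑ i ∈ Finset.Icc j k, c i ρ₀ * h ^ (i - j) / (Nat.factorial (i - j) : ℝ)) =
      c j ρ₀ + ∑ i ∈ Finset.Icc (j + 1) k, c i ρ₀ * h ^ (i - j) / (Nat.factorial (i - j) : ℝ) := by
    have hins : Finset.Icc j k = insert j (Finset.Icc (j + 1) k) := by
      ext x; simp only [Finset.mem_Icc, Finset.mem_insert]; omega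
    rw [hins, Finset.sum_insert (by simp)]
    congr 1
    simp [Nat.sub_self]
  have htgt : c j (ρ₀ + h) - c j ρ₀ -
      (∑ i ∈ Finset.Icc (j + 1) k, c i ρ₀ * h ^ (i - j) / (Nat.factorial (i - j) : ℝ)) =
      -(D j) := by
    rw [hD]
    simp only []
    rw [hsplit, ← hρ₁def]
    ring
  rw [htgt, abs_neg]
  apply le_trans hbound
  apply mul_le_mul_of_nonneg_right _ (pow_nonneg (le_of_lt hh) _)
  apply mul_le_mul_of_nonneg_right _ (by positivity)
  apply mul_le_mul_of_nonneg_right _ hΛ0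
  exact_mod_cast Nat.factorial_le hjk


lemma tail_bound' (k j : ℕ) (M h : ℝ) (hM : 0 ≤ M) (hh0 : 0 ≤ h) (hh1 : h ≤ 1)
    (g : ℕ → ℝ) (hg : ∀ i, j + 2 ≤ i → i ≤ k → |g i| ≤ M) :
    |∑ i ∈ Finset.Icc (j + 2) k, g i * h ^ (i - j) / (Nat.factorial (i - j) : ℝ)| ≤
      (k : ℝ) * M * h ^ 2 := by
  apply le_trans (Finset.abs_sum_le_sum_abs _ _)
  have hterm : ∀ i ∈ Finset.Icc (j + 2) k,
      |g i * h ^ (i - j) / (Nat.factorial (i - j) : ℝ)| ≤ M * h ^ 2 := by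
    intro i hi
    obtain ⟨hi1, hi2⟩ := Finset.mem_Icc.mp hi
    have hf : (1 : ℝ) ≤ (Nat.factorial (i - j) : ℝ) := by
      exact_mod_cast Nat.one_le_iff_ne_zero.mpr (Nat.factorial_ne_zero _)
    rw [abs_div, abs_mul, abs_pow, abs_of_nonneg hh0, abs_of_nonneg (by linarith : (0:ℝ) ≤ (Nat.factorial (i-j) : ℝ))]
    have h1 : |g i| * h ^ (i - j) / (Nat.factorial (i - j) : ℝ) ≤ |g i| * h ^ (i - j) := by
      apply div_le_self (by positivity) hf
    apply le_trans h1
    have h2 : h ^ (i - j) ≤ h ^ 2 := pow_le_pow_of_le_one hh0 hh1 (by omega)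
    have h3 : |g i| ≤ M := hg i hi1 hi2
    exact mul_le_mul h3 h2 (by positivity) hM
  apply le_trans (Finset.sum_le_sum hterm)
  rw [Finset.sum_const, nsmul_eq_mul]
  have hcard : ((Finset.Icc (j + 2) k).card : ℝ) ≤ (k : ℝ) := by
    rw [Nat.card_Icc]
    exact_mod_cast by omega
  calc ((Finset.Icc (j + 2) k).card : ℝ) * (M * h ^ 2) ≤ (k : ℝ) * (M * h ^ 2) :=
        mul_le_mul_of_nonneg_right hcard (by positivity)
    _ = (k : ℝ) * M * h ^ 2 := by ring

lemma lemLip' (k : ℕ) (hk : 1 ≤ k) (M C : ℝ) (hM : 0 ≤ M) (hC : 0 ≤ C) :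
    ∃ L : ℝ, 0 ≤ L ∧ ∀ (f : ℝ → ℝ) (c : ℕ → ℝ → ℝ),
      (∀ j : ℕ, 1 ≤ j → j ≤ k → ∀ ρ₀ : ℝ, 0 < ρ₀ → |c j ρ₀| ≤ M) →
      (∀ ρ₀ : ℝ, 0 < ρ₀ → ∀ ρ : ℝ, 0 < ρ → ρ ≤ 1 →
        |f (ρ₀ + ρ) - f ρ₀ -
            ∑ j ∈ Finset.Icc 1 k, c j ρ₀ * ρ ^ j / (Nat.factorial j : ℝ)| ≤
          C * ρ ^ (k + 1)) →
      ∀ j : ℕ, 1 ≤ j → j ≤ k → ∀ ρ₀ ρ₁ : ℝ, 0 < ρ₀ → 0 < ρ₁ →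
        |ρ₁ - ρ₀| ≤ 1 / (2 * ((k : ℝ) + 1)) →
        |c j ρ₁ - c j ρ₀| ≤ L * |ρ₁ - ρ₀| := by
  obtain ⟨K, hK0, hK⟩ := lemA' k hk M C hM hC
  refine ⟨(k : ℝ) * M + K, by positivity, ?_⟩
  intro f c hb hexp j hj1 hjk ρ₀ ρ₁ hρ₀ hρ₁ hd
  have hδ1 : 1 / (2 * ((k : ℝ) + 1)) ≤ 1 := by
    rw [div_le_one (by positivity)]
    have : (1 : ℝ) ≤ (k : ℝ) := by exact_mod_cast hk
    linarith
  -- one-sided claim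
  have claim : ∀ σ h : ℝ, 0 < σ → 0 < h → h ≤ 1 / (2 * ((k : ℝ) + 1)) →
      |c j (σ + h) - c j σ| ≤ ((k : ℝ) * M + K) * h := by
    intro σ h hσ hh hhδ
    have hh1 : h ≤ 1 := le_trans hhδ hδ1
    have hA := hK f c hexp j hj1 hjk σ h hσ hh hhδ
    have htail : |∑ i ∈ Finset.Icc (j + 1) k, c i σ * h ^ (i - j) / (Nat.factorial (i - j) : ℝ)|
        ≤ (k : ℝ) * M * h := by
      apply le_trans (Finset.abs_sum_le_sum_abs _ _)
      have hterm : ∀ i ∈ Finset.Icc (j + 1) k,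
          |c i σ * h ^ (i - j) / (Nat.factorial (i - j) : ℝ)| ≤ M * h := by
        intro i hi
        obtain ⟨hi1, hi2⟩ := Finset.mem_Icc.mp hi
        have hf : (1 : ℝ) ≤ (Nat.factorial (i - j) : ℝ) := by
          exact_mod_cast Nat.one_le_iff_ne_zero.mpr (Nat.factorial_ne_zero _)
        rw [abs_div, abs_mul, abs_pow, abs_of_pos hh,
          abs_of_nonneg (by linarith : (0:ℝ) ≤ (Nat.factorial (i-j) : ℝ))]
        apply le_trans (div_le_self (by positivity) hf)
        have h2 : h ^ (i - j) ≤ h ^ 1 := pow_le_pow_of_le_one (le_of_lt hh) hh1 (by omega)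
        rw [pow_one] at h2
        exact mul_le_mul (hb i (by omega) hi2 σ hσ) h2 (by positivity) hM
      apply le_trans (Finset.sum_le_sum hterm)
      rw [Finset.sum_const, nsmul_eq_mul]
      have hcard : ((Finset.Icc (j + 1) k).card : ℝ) ≤ (k : ℝ) := by
        rw [Nat.card_Icc]; exact_mod_cast by omega
      calc ((Finset.Icc (j + 1) k).card : ℝ) * (M * h) ≤ (k : ℝ) * (M * h) :=
            mul_le_mul_of_nonneg_right hcard (by positivity)
        _ = (k : ℝ) * M * h := by ring
    have hpow : K * h ^ (k + 1 - j) ≤ K * h := by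
      apply mul_le_mul_of_nonneg_left _ hK0
      have := pow_le_pow_of_le_one (le_of_lt hh) hh1 (by omega : 1 ≤ k + 1 - j)
      rw [pow_one] at this
      exact this
    have tri : |c j (σ + h) - c j σ| ≤
        |∑ i ∈ Finset.Icc (j + 1) k, c i σ * h ^ (i - j) / (Nat.factorial (i - j) : ℝ)| +
        |c j (σ + h) - c j σ -
          ∑ i ∈ Finset.Icc (j + 1) k, c i σ * h ^ (i - j) / (Nat.factorial (i - j) : ℝ)| := by
      have := abs_add_le (∑ i ∈ Finset.Icc (j + 1) k, c i σ * h ^ (i - j) / (Nat.factorial (i - j) : ℝ))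
        (c j (σ + h) - c j σ -
          ∑ i ∈ Finset.Icc (j + 1) k, c i σ * h ^ (i - j) / (Nat.factorial (i - j) : ℝ))
      simpa using this
    calc |c j (σ + h) - c j σ| ≤ _ + _ := tri
      _ ≤ (k : ℝ) * M * h + K * h := add_le_add htail (le_trans hA hpow)
      _ = ((k : ℝ) * M + K) * h := by ring
  rcases lt_trichotomy ρ₀ ρ₁ with hlt | heq | hgt
  · have h1 : ρ₁ = ρ₀ + (ρ₁ - ρ₀) := by ring
    have h2 : |ρ₁ - ρ₀| = ρ₁ - ρ₀ := abs_of_pos (by linarith)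
    rw [h2]
    have := claim ρ₀ (ρ₁ - ρ₀) hρ₀ (by linarith) (by rw [← h2]; exact hd)
    rw [← h1] at this
    exact this
  · rw [heq]; simp
  · have h2 : |ρ₁ - ρ₀| = ρ₀ - ρ₁ := by rw [abs_sub_comm]; exact abs_of_pos (by linarith)
    rw [h2, abs_sub_comm]
    have := claim ρ₁ (ρ₀ - ρ₁) hρ₁ (by linarith) (by rw [← h2]; exact hd)
    rw [show ρ₁ + (ρ₀ - ρ₁) = ρ₀ by ring] at this
    exact this


lemma lemB (k : ℕ) (hk : 1 ≤ k) (M C : ℝ) (hM : 0 ≤ M) (hC : 0 ≤ C) :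
    ∃ K₂ : ℝ, 0 ≤ K₂ ∧ ∀ (f : ℝ → ℝ) (c : ℕ → ℝ → ℝ),
      (∀ j : ℕ, 1 ≤ j → j ≤ k → ∀ ρ₀ : ℝ, 0 < ρ₀ → |c j ρ₀| ≤ M) →
      (∀ ρ₀ : ℝ, 0 < ρ₀ → ∀ ρ : ℝ, 0 < ρ → ρ ≤ 1 →
        |f (ρ₀ + ρ) - f ρ₀ -
            ∑ j ∈ Finset.Icc 1 k, c j ρ₀ * ρ ^ j / (Nat.factorial j : ℝ)| ≤
          C * ρ ^ (k + 1)) →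
      (∀ ρ₀ h : ℝ, 0 < ρ₀ → 0 < ρ₀ + h → h ≠ 0 → |h| ≤ 1 / (2 * ((k : ℝ) + 1)) →
        |f (ρ₀ + h) - f ρ₀ - c 1 ρ₀ * h| ≤ K₂ * h ^ 2) ∧
      (∀ j : ℕ, 1 ≤ j → j + 1 ≤ k → ∀ ρ₀ h : ℝ, 0 < ρ₀ → 0 < ρ₀ + h → h ≠ 0 →
        |h| ≤ 1 / (2 * ((k : ℝ) + 1)) →
        |c j (ρ₀ + h) - c j ρ₀ - c (j + 1) ρ₀ * h| ≤ K₂ * h ^ 2) := by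
  obtain ⟨K, hK0, hK⟩ := lemA' k hk M C hM hC
  obtain ⟨L, hL0, hL⟩ := lemLip' k hk M C hM hC
  refine ⟨C + K + L + (k : ℝ) * M, by positivity, ?_⟩
  intro f c hb hexp
  have hδ1 : 1 / (2 * ((k : ℝ) + 1)) ≤ 1 := by
    rw [div_le_one (by positivity)]
    have : (1 : ℝ) ≤ (k : ℝ) := by exact_mod_cast hk
    linarith
  have tri3 : ∀ A B T : ℝ, |(-A) - B - T| ≤ |A| + |B| + |T| := by
    intro A B T
    calc |(-A) - B - T| ≤ |(-A) - B| + |T| := abs_sub _ _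
      _ ≤ |(-A)| + |B| + |T| := by have := abs_sub (-A) B; linarith
      _ = |A| + |B| + |T| := by rw [abs_neg]
  constructor
  · -- first order expansion of f
    intro ρ₀ h hρ₀ hσ hne hδ
    rcases lt_trichotomy h 0 with hneg | h0 | hpos
    · -- h < 0
      set σ : ℝ := ρ₀ + h with hσdef
      set e : ℝ := -h with hedef
      have he0 : 0 < e := by simp [hedef]; linarith
      have heabs : |h| = e := by rw [abs_of_neg hneg]
      have heδ : e ≤ 1 / (2 * ((k : ℝ) + 1)) := by rw [← heabs]; exact hδ
      have he1 : e ≤ 1 := le_trans heδ hδ1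
      have hσe : σ + e = ρ₀ := by rw [hσdef, hedef]; ring
      have hE := hexp σ hσ e he0 he1
      rw [hσe] at hE
      have hsplit : ∑ i ∈ Finset.Icc 1 k, c i σ * e ^ i / (Nat.factorial i : ℝ) =
          c 1 σ * e + ∑ i ∈ Finset.Icc 2 k, c i σ * e ^ i / (Nat.factorial i : ℝ) := by
        rw [show Finset.Icc 1 k = insert 1 (Finset.Icc 2 k) by
          ext x; simp only [Finset.mem_Icc, Finset.mem_insert]; omega,
          Finset.sum_insert (by simp)]
        simp [Nat.factorial]
      have hLip := hL f c hb hexp 1 le_rfl hk ρ₀ σ hρ₀ hσ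
        (by rw [show σ - ρ₀ = h by rw [hσdef]; ring]; exact hδ)
      rw [show σ - ρ₀ = h by rw [hσdef]; ring] at hLip
      have hX : f (ρ₀ + h) - f ρ₀ - c 1 ρ₀ * h =
          -(f ρ₀ - f σ - ∑ i ∈ Finset.Icc 1 k, c i σ * e ^ i / (Nat.factorial i : ℝ))
          - (c 1 σ - c 1 ρ₀) * e
          - ∑ i ∈ Finset.Icc 2 k, c i σ * e ^ i / (Nat.factorial i : ℝ) := by
        rw [hsplit, ← hσdef, hedef]; ring
      rw [hX]
      have htail : |∑ i ∈ Finset.Icc 2 k, c i σ * e ^ i / (Nat.factorial i : ℝ)| ≤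
          (k : ℝ) * M * e ^ 2 := by
        have := tail_bound' k 0 M e hM (le_of_lt he0) he1 (fun i => c i σ)
          (fun i hi1 hi2 => hb i (by omega) hi2 σ hσ)
        simpa using this
      have hone : C * e ^ (k + 1) ≤ C * e ^ 2 := by
        apply mul_le_mul_of_nonneg_left _ hC
        exact pow_le_pow_of_le_one (le_of_lt he0) he1 (by omega)
      have hlipb : |(c 1 σ - c 1 ρ₀) * e| ≤ L * e ^ 2 := by
        rw [abs_mul, abs_of_pos he0]
        calc |c 1 σ - c 1 ρ₀| * e ≤ (L * |h|) * e :=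
              mul_le_mul_of_nonneg_right hLip (le_of_lt he0)
          _ = L * e ^ 2 := by rw [heabs]; ring
      have he2h2 : e ^ 2 = h ^ 2 := by rw [hedef]; ring
      calc |_ - _ - _| ≤ _ + _ + _ := tri3 _ _ _
        _ ≤ C * e ^ 2 + L * e ^ 2 + (k : ℝ) * M * e ^ 2 :=
            add_le_add (add_le_add (le_trans hE hone) hlipb) htail
        _ ≤ (C + K + L + (k : ℝ) * M) * h ^ 2 := by rw [he2h2] at *; nlinarith [sq_nonneg h]
    · exact absurd h0 hne
    · -- h > 0
      have hh1 : h ≤ 1 := le_trans (by rwa [abs_of_pos hpos] at hδ) hδ1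
      have hE := hexp ρ₀ hρ₀ h hpos hh1
      have hsplit : ∑ i ∈ Finset.Icc 1 k, c i ρ₀ * h ^ i / (Nat.factorial i : ℝ) =
          c 1 ρ₀ * h + ∑ i ∈ Finset.Icc 2 k, c i ρ₀ * h ^ i / (Nat.factorial i : ℝ) := by
        rw [show Finset.Icc 1 k = insert 1 (Finset.Icc 2 k) by
          ext x; simp only [Finset.mem_Icc, Finset.mem_insert]; omega,
          Finset.sum_insert (by simp)]
        simp [Nat.factorial]
      have hX : f (ρ₀ + h) - f ρ₀ - c 1 ρ₀ * h =
          (f (ρ₀ + h) - f ρ₀ - ∑ i ∈ Finset.Icc 1 k, c i ρ₀ * h ^ i / (Nat.factorial i : ℝ))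
          + ∑ i ∈ Finset.Icc 2 k, c i ρ₀ * h ^ i / (Nat.factorial i : ℝ) := by
        rw [hsplit]; ring
      rw [hX]
      have htail : |∑ i ∈ Finset.Icc 2 k, c i ρ₀ * h ^ i / (Nat.factorial i : ℝ)| ≤
          (k : ℝ) * M * h ^ 2 := by
        have := tail_bound' k 0 M h hM (le_of_lt hpos) hh1 (fun i => c i ρ₀)
          (fun i hi1 hi2 => hb i (by omega) hi2 ρ₀ hρ₀)
        simpa using this
      have hone : C * h ^ (k + 1) ≤ C * h ^ 2 := by
        apply mul_le_mul_of_nonneg_left _ hC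
        exact pow_le_pow_of_le_one (le_of_lt hpos) hh1 (by omega)
      calc |_ + _| ≤ _ + _ := abs_add_le _ _
        _ ≤ C * h ^ 2 + (k : ℝ) * M * h ^ 2 := add_le_add (le_trans hE hone) htail
        _ ≤ (C + K + L + (k : ℝ) * M) * h ^ 2 := by nlinarith [sq_nonneg h]
  · -- expansion of c j
    intro j hj1 hjk1 ρ₀ h hρ₀ hσ hne hδ
    have hjk : j ≤ k := by omega
    rcases lt_trichotomy h 0 with hneg | h0 | hpos
    · set σ : ℝ := ρ₀ + h with hσdef
      set e : ℝ := -h with hedef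
      have he0 : 0 < e := by simp [hedef]; linarith
      have heabs : |h| = e := by rw [abs_of_neg hneg]
      have heδ : e ≤ 1 / (2 * ((k : ℝ) + 1)) := by rw [← heabs]; exact hδ
      have he1 : e ≤ 1 := le_trans heδ hδ1
      have hσe : σ + e = ρ₀ := by rw [hσdef, hedef]; ring
      have hA := hK f c hexp j hj1 hjk σ e hσ he0 heδ
      rw [hσe] at hA
      have hsplit : ∑ i ∈ Finset.Icc (j + 1) k,
            c i σ * e ^ (i - j) / (Nat.factorial (i - j) : ℝ) =
          c (j + 1) σ * e + ∑ i ∈ Finset.Icc (j + 2) k,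
            c i σ * e ^ (i - j) / (Nat.factorial (i - j) : ℝ) := by
        rw [show Finset.Icc (j + 1) k = insert (j + 1) (Finset.Icc (j + 2) k) by
          ext x; simp only [Finset.mem_Icc, Finset.mem_insert]; omega,
          Finset.sum_insert (by simp)]
        congr 1
        rw [show j + 1 - j = 1 by omega]
        simp [Nat.factorial]
      have hLip := hL f c hb hexp (j + 1) (by omega) hjk1 ρ₀ σ hρ₀ hσ
        (by rw [show σ - ρ₀ = h by rw [hσdef]; ring]; exact hδ)
      rw [show σ - ρ₀ = h by rw [hσdef]; ring] at hLip
      have hX : c j (ρ₀ + h) - c j ρ₀ - c (j + 1) ρ₀ * h =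
          -(c j ρ₀ - c j σ - ∑ i ∈ Finset.Icc (j + 1) k,
              c i σ * e ^ (i - j) / (Nat.factorial (i - j) : ℝ))
          - (c (j + 1) σ - c (j + 1) ρ₀) * e
          - ∑ i ∈ Finset.Icc (j + 2) k,
              c i σ * e ^ (i - j) / (Nat.factorial (i - j) : ℝ) := by
        rw [hsplit, ← hσdef, hedef]; ring
      rw [hX]
      have htail : |∑ i ∈ Finset.Icc (j + 2) k,
            c i σ * e ^ (i - j) / (Nat.factorial (i - j) : ℝ)| ≤
          (k : ℝ) * M * e ^ 2 :=
        tail_bound' k j M e hM (le_of_lt he0) he1 (fun i => c i σ)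
          (fun i hi1 hi2 => hb i (by omega) hi2 σ hσ)
      have hone : K * e ^ (k + 1 - j) ≤ K * e ^ 2 := by
        apply mul_le_mul_of_nonneg_left _ hK0
        exact pow_le_pow_of_le_one (le_of_lt he0) he1 (by omega)
      have hlipb : |(c (j + 1) σ - c (j + 1) ρ₀) * e| ≤ L * e ^ 2 := by
        rw [abs_mul, abs_of_pos he0]
        calc |c (j + 1) σ - c (j + 1) ρ₀| * e ≤ (L * |h|) * e :=
              mul_le_mul_of_nonneg_right hLip (le_of_lt he0)
          _ = L * e ^ 2 := by rw [heabs]; ring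
      have he2h2 : e ^ 2 = h ^ 2 := by rw [hedef]; ring
      calc |_ - _ - _| ≤ _ + _ + _ := tri3 _ _ _
        _ ≤ K * e ^ 2 + L * e ^ 2 + (k : ℝ) * M * e ^ 2 :=
            add_le_add (add_le_add (le_trans hA hone) hlipb) htail
        _ ≤ (C + K + L + (k : ℝ) * M) * h ^ 2 := by rw [he2h2] at *; nlinarith [sq_nonneg h]
    · exact absurd h0 hne
    · have hδ' : h ≤ 1 / (2 * ((k : ℝ) + 1)) := by rwa [abs_of_pos hpos] at hδ
      have hh1 : h ≤ 1 := le_trans hδ' hδ1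
      have hA := hK f c hexp j hj1 hjk ρ₀ h hρ₀ hpos hδ'
      have hsplit : ∑ i ∈ Finset.Icc (j + 1) k,
            c i ρ₀ * h ^ (i - j) / (Nat.factorial (i - j) : ℝ) =
          c (j + 1) ρ₀ * h + ∑ i ∈ Finset.Icc (j + 2) k,
            c i ρ₀ * h ^ (i - j) / (Nat.factorial (i - j) : ℝ) := by
        rw [show Finset.Icc (j + 1) k = insert (j + 1) (Finset.Icc (j + 2) k) by
          ext x; simp only [Finset.mem_Icc, Finset.mem_insert]; omega,
          Finset.sum_insert (by simp)]
        congr 1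
        rw [show j + 1 - j = 1 by omega]
        simp [Nat.factorial]
      have hX : c j (ρ₀ + h) - c j ρ₀ - c (j + 1) ρ₀ * h =
          (c j (ρ₀ + h) - c j ρ₀ - ∑ i ∈ Finset.Icc (j + 1) k,
              c i ρ₀ * h ^ (i - j) / (Nat.factorial (i - j) : ℝ))
          + ∑ i ∈ Finset.Icc (j + 2) k,
              c i ρ₀ * h ^ (i - j) / (Nat.factorial (i - j) : ℝ) := by
        rw [hsplit]; ring
      rw [hX]
      have htail : |∑ i ∈ Finset.Icc (j + 2) k,
            c i ρ₀ * h ^ (i - j) / (Nat.factorial (i - j) : ℝ)| ≤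
          (k : ℝ) * M * h ^ 2 :=
        tail_bound' k j M h hM (le_of_lt hpos) hh1 (fun i => c i ρ₀)
          (fun i hi1 hi2 => hb i (by omega) hi2 ρ₀ hρ₀)
      have hone : K * h ^ (k + 1 - j) ≤ K * h ^ 2 := by
        apply mul_le_mul_of_nonneg_left _ hK0
        exact pow_le_pow_of_le_one (le_of_lt hpos) hh1 (by omega)
      calc |_ + _| ≤ _ + _ := abs_add_le _ _
        _ ≤ K * h ^ 2 + (k : ℝ) * M * h ^ 2 := add_le_add (le_trans hA hone) htail
        _ ≤ (C + K + L + (k : ℝ) * M) * h ^ 2 := by nlinarith [sq_nonneg h]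

lemma hasDerivAt_of_sq (g : ℝ → ℝ) (a d K ε : ℝ) (hε : 0 < ε)
    (H : ∀ h : ℝ, h ≠ 0 → |h| ≤ ε → |g (a + h) - g a - d * h| ≤ K * h ^ 2) :
    HasDerivAt g d a := by
  rw [hasDerivAt_iff_isLittleO, Asymptotics.isLittleO_iff]
  intro c hc
  have hKabs : ∀ h : ℝ, h ≠ 0 → |h| ≤ ε → |g (a + h) - g a - d * h| ≤ |K| * h ^ 2 := by
    intro h h1 h2
    exact le_trans (H h h1 h2) (mul_le_mul_of_nonneg_right (le_abs_self K) (sq_nonneg h))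
  have hδpos : 0 < min ε (c / (|K| + 1)) := lt_min hε (by positivity)
  filter_upwards [Metric.closedBall_mem_nhds a hδpos] with x hx
  rw [Metric.mem_closedBall, Real.dist_eq] at hx
  rcases eq_or_ne x a with rfl | hne
  · simp
  · have h1 : x - a ≠ 0 := sub_ne_zero.mpr hne
    have h2 : |x - a| ≤ ε := le_trans hx (min_le_left _ _)
    have h3 : |x - a| ≤ c / (|K| + 1) := le_trans hx (min_le_right _ _)
    have := hKabs (x - a) h1 h2
    rw [show a + (x - a) = x by ring] at this
    rw [Real.norm_eq_abs, Real.norm_eq_abs, smul_eq_mul]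
    calc |g x - g a - (x - a) * d| = |g x - g a - d * (x - a)| := by ring_nf
      _ ≤ |K| * (x - a) ^ 2 := this
      _ = |K| * |x - a| * |x - a| := by rw [← sq_abs (x - a)]; ring
      _ ≤ |K| * |x - a| * (c / (|K| + 1)) := by
          apply mul_le_mul_of_nonneg_left h3 (by positivity)
      _ ≤ c * |x - a| := by
          rw [div_eq_mul_inv]
          have hK1 : 0 < |K| + 1 := by positivity
          have : |K| / (|K| + 1) ≤ 1 := by
            rw [div_le_one hK1]; linarith [abs_nonneg K]
          have h4 : |K| * |x - a| * (c * (|K| + 1)⁻¹) =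
              (|K| / (|K| + 1)) * c * |x - a| := by field_simp
          rw [h4]
          apply mul_le_mul_of_nonneg_right _ (abs_nonneg _)
          calc (|K| / (|K| + 1)) * c ≤ 1 * c :=
            mul_le_mul_of_nonneg_right this (le_of_lt hc)
            _ = c := one_mul c


/-- a uniform one-sided `k`-th order expansion of `f` with coefficient
functions bounded by `M` implies that `f` is `k` times differentiable on `(0,∞)` with
`j`-th derivative `c_j` (expressed via `iteratedDeriv`: the `(j−1)`-st iterated derivative
of `f` has derivative `c_j(ρ₀)` at each `ρ₀ > 0`), and each `c_j` is Lipschitz, with a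
constant `C'` depending only on `k`, `M`, `C`, on pairs of positive points at distance at
most `1/(2(k+1))`. -/
theorem smoothness_core (k : ℕ) (hk : 1 ≤ k) (M C : ℝ) (hM : 0 ≤ M) (hC : 0 ≤ C) :
    ∃ C' : ℝ, 0 ≤ C' ∧
      ∀ (f : ℝ → ℝ) (c : ℕ → ℝ → ℝ),
        (∀ j : ℕ, 1 ≤ j → j ≤ k → ∀ ρ₀ : ℝ, 0 < ρ₀ → |c j ρ₀| ≤ M) →
        (∀ ρ₀ : ℝ, 0 < ρ₀ → ∀ ρ : ℝ, 0 < ρ → ρ ≤ 1 →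
          |f (ρ₀ + ρ) - f ρ₀ -
              ∑ j ∈ Finset.Icc 1 k, c j ρ₀ * ρ ^ j / (Nat.factorial j : ℝ)| ≤
            C * ρ ^ (k + 1)) →
        (∀ j : ℕ, 1 ≤ j → j ≤ k → ∀ ρ₀ : ℝ, 0 < ρ₀ →
          HasDerivAt (iteratedDeriv (j - 1) f) (c j ρ₀) ρ₀) ∧
        (∀ j : ℕ, 1 ≤ j → j ≤ k → ∀ ρ₀ ρ₁ : ℝ, 0 < ρ₀ → 0 < ρ₁ →
          |ρ₁ - ρ₀| ≤ 1 / (2 * ((k : ℝ) + 1)) →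
          |c j ρ₁ - c j ρ₀| ≤ C' * |ρ₁ - ρ₀|) := by
  obtain ⟨L, hL0, hL⟩ := lemLip' k hk M C hM hC
  obtain ⟨K₂, hK₂0, hK₂⟩ := lemB k hk M C hM hC
  refine ⟨L, hL0, ?_⟩
  intro f c hb hexp
  obtain ⟨hB1, hB2⟩ := hK₂ f c hb hexp
  constructor
  · -- derivatives
    intro j hj1
    induction j, hj1 using Nat.le_induction with
    | base =>
      intro _ ρ₀ hρ₀
      have hε : 0 < min (1 / (2 * ((k : ℝ) + 1))) (ρ₀ / 2) :=
        lt_min (by positivity) (by linarith)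
      have hd := hasDerivAt_of_sq f ρ₀ (c 1 ρ₀) K₂ _ hε ?_
      · simpa [iteratedDeriv_zero] using hd
      · intro h hne hle
        have h1 : |h| ≤ 1 / (2 * ((k : ℝ) + 1)) := le_trans hle (min_le_left _ _)
        have h2 : |h| ≤ ρ₀ / 2 := le_trans hle (min_le_right _ _)
        have h3 : 0 < ρ₀ + h := by have := neg_abs_le h; linarith
        exact hB1 ρ₀ h hρ₀ h3 hne h1
    | succ j hj1 ih =>
      intro hjk ρ₀ hρ₀
      have hjk' : j ≤ k := by omega
      have hiter : Set.EqOn (iteratedDeriv j f) (c j) (Set.Ioi 0) := by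
        intro ρ hρ
        have hstep : iteratedDeriv j f = deriv (iteratedDeriv (j - 1) f) := by
          conv_lhs => rw [show j = (j - 1) + 1 by omega]
          rw [iteratedDeriv_succ]
        rw [hstep]
        exact (ih hjk' ρ hρ).deriv
      have hdc : HasDerivAt (c j) (c (j + 1) ρ₀) ρ₀ := by
        have hε : 0 < min (1 / (2 * ((k : ℝ) + 1))) (ρ₀ / 2) :=
          lt_min (by positivity) (by linarith)
        apply hasDerivAt_of_sq (c j) ρ₀ (c (j + 1) ρ₀) K₂ _ hε
        intro h hne hle
        have h1 : |h| ≤ 1 / (2 * ((k : ℝ) + 1)) := le_trans hle (min_le_left _ _)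
        have h2 : |h| ≤ ρ₀ / 2 := le_trans hle (min_le_right _ _)
        have h3 : 0 < ρ₀ + h := by have := neg_abs_le h; linarith
        exact hB2 j hj1 hjk ρ₀ h hρ₀ h3 hne h1
      have heq : iteratedDeriv j f =ᶠ[nhds ρ₀] c j :=
        Filter.eventuallyEq_of_mem (Ioi_mem_nhds hρ₀) hiter
      have hfin := hdc.congr_of_eventuallyEq heq
      simpa [Nat.add_sub_cancel] using hfin
  · intro j hj1 hjk ρ₀ ρ₁ hρ₀ hρ₁ hd
    exact hL f c hb hexp j hj1 hjk ρ₀ ρ₁ hρ₀ hρ₁ hd
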